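/- Let Q be a regular local ring (or polynomial ring over k), I ⊆ q² an ideal, R = Q/I, and f₁,…,f_d ∈ I a regular sequence of elements of Q whose initial forms f₁*,…,f_d* form a regular sequence in gr(Q). Then for P = Q/(f₁,…,f_d), the associated graded ring gr(P) equals gr(Q)/(f₁*,…,f_d*); in particular (f₁,…,f_d)* = (f₁*,…,f_d*). -/

import Mathlib

open IsLocalRing

private lemma ideal_sum_le {R ι : Type*} [CommRing R] {s : Finset ι} {p : ι → Ideal R}
    {P : Ideal R} (h : ∀ j ∈ s, p j ≤ P) : ∑ j ∈ s, p j ≤ P := by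
  classical
  induction s using Finset.induction_on with
  | empty => simp
  | insert _ _ hj ih =>
    rw [Finset.sum_insert hj, Submodule.add_eq_sup]
    exact sup_le (h _ (Finset.mem_insert_self _ _))
      (ih fun j hj' => h j (Finset.mem_insert_of_mem hj'))

private lemma ideal_le_sum {R ι : Type*} [CommRing R] {s : Finset ι} {p : ι → Ideal R}
    {j : ι} (hj : j ∈ s) : p j ≤ ∑ i ∈ s, p i := by
  classical
  rw [← Finset.add_sum_erase s p hj, Submodule.add_eq_sup]
  exact le_sup_left

private lemma ideal_sum_le_sum {R ι : Type*} [CommRing R] {s t : Finset ι} {p : ι → Ideal R}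
    (hst : s ⊆ t) : ∑ j ∈ s, p j ≤ ∑ j ∈ t, p j :=
  ideal_sum_le fun j hj => ideal_le_sum (hst hj)

theorem stmt_17 {Q : Type*} [CommRing Q] [IsLocalRing Q] [IsNoetherianRing Q]
    (hreg : ∃ L : List Q, Ideal.span {a : Q | a ∈ L} = maximalIdeal Q ∧
      RingTheory.Sequence.IsRegular Q L)
    (I : Ideal Q) (hI : I ≤ (maximalIdeal Q) ^ 2)
    (d : ℕ) (f : Fin d → Q) (hfI : ∀ i, f i ∈ I)
    (hfreg : RingTheory.Sequence.IsRegular Q (List.ofFn f))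
    (deg : Fin d → ℕ)
    (hdeg : ∀ i, f i ∈ (maximalIdeal Q) ^ (deg i) ∧ f i ∉ (maximalIdeal Q) ^ (deg i + 1))
    (hinit : ∀ (i : Fin d) (n : ℕ), ∀ a ∈ (maximalIdeal Q) ^ n,
      f i * a ∈ (∑ j ∈ Finset.univ.filter (fun j => j < i),
            Ideal.span {f j} * (maximalIdeal Q) ^ (n + deg i - deg j)) ⊔
          (maximalIdeal Q) ^ (n + deg i + 1) →
        a ∈ (∑ j ∈ Finset.univ.filter (fun j => j < i),
            Ideal.span {f j} * (maximalIdeal Q) ^ (n - deg j)) ⊔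
          (maximalIdeal Q) ^ (n + 1)) :
    ∀ n : ℕ, ∀ a ∈ Ideal.span (Set.range f), a ∈ (maximalIdeal Q) ^ n →
      a ∈ (∑ j : Fin d, Ideal.span {f j} * (maximalIdeal Q) ^ (n - deg j)) ⊔
        (maximalIdeal Q) ^ (n + 1) := by
  classical
  set q := maximalIdeal Q with hqdef
  suffices H : ∀ n : ℕ, ∀ a ∈ Ideal.span (Set.range f), a ∈ q ^ n →
      a ∈ ∑ j : Fin d, Ideal.span {f j} * q ^ (n - deg j) by
    intro n a ha hq
    exact Submodule.mem_sup_left (H n a ha hq)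
  intro n
  induction n with
  | zero =>
    intro a ha _
    refine Ideal.span_le.mpr ?_ ha
    rintro _ ⟨j, rfl⟩
    refine ideal_le_sum (Finset.mem_univ j) ?_
    simpa [Nat.zero_sub] using Ideal.mem_span_singleton_self (f j)
  | succ n ih =>
    intro a ha hq1
    have ha' : a ∈ ∑ j : Fin d, Ideal.span {f j} * q ^ (n - deg j) :=
      ih a ha (Ideal.pow_le_pow_right (Nat.le_succ n) hq1)
    -- inner induction: move coefficients up one degree, one generator at a time
    have inner : ∀ i : ℕ, ∀ a ∈ q ^ (n + 1),
        a ∈ (∑ j ∈ Finset.univ.filter (fun j : Fin d => j.val < i),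
              Ideal.span {f j} * q ^ (n - deg j)) ⊔
            (∑ j ∈ Finset.univ.filter (fun j : Fin d => i ≤ j.val),
              Ideal.span {f j} * q ^ (n + 1 - deg j)) →
        a ∈ ∑ j : Fin d, Ideal.span {f j} * q ^ (n + 1 - deg j) := by
      intro i
      induction i with
      | zero =>
        intro a _ hA
        have e1 : (Finset.univ.filter (fun j : Fin d => j.val < 0)) = (∅ : Finset (Fin d)) := by
          ext j; simp
        have e2 : (Finset.univ.filter (fun j : Fin d => 0 ≤ j.val)) = Finset.univ := by
          ext j; simp
        rw [e1, e2, Finset.sum_empty] at hA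
        simpa using hA
      | succ i ih2 =>
        intro a haq hA
        by_cases hid : i < d
        · set ι : Fin d := ⟨i, hid⟩ with hιdef
          have hι1 : ι ∉ Finset.univ.filter (fun j : Fin d => j.val < i) := by
            simp [hιdef]
          have hι2 : ι ∉ Finset.univ.filter (fun j : Fin d => i + 1 ≤ j.val) := by
            simp [hιdef]
          have hsplit1 : Finset.univ.filter (fun j : Fin d => j.val < i + 1)
              = insert ι (Finset.univ.filter (fun j : Fin d => j.val < i)) := by
            ext j
            simp only [Finset.mem_filter, Finset.mem_univ, true_and, Finset.mem_insert,
              Fin.ext_iff, hιdef]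
            omega
          have hsplit2 : Finset.univ.filter (fun j : Fin d => i ≤ j.val)
              = insert ι (Finset.univ.filter (fun j : Fin d => i + 1 ≤ j.val)) := by
            ext j
            simp only [Finset.mem_filter, Finset.mem_univ, true_and, Finset.mem_insert,
              Fin.ext_iff, hιdef]
            omega
          rw [hsplit1, Finset.sum_insert hι1, Submodule.add_eq_sup] at hA
          apply ih2 a haq
          rw [hsplit2, Finset.sum_insert hι2, Submodule.add_eq_sup]
          set S := ∑ j ∈ Finset.univ.filter (fun j : Fin d => j.val < i),
            Ideal.span {f j} * q ^ (n - deg j) with hSdef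
          set T := ∑ j ∈ Finset.univ.filter (fun j : Fin d => i + 1 ≤ j.val),
            Ideal.span {f j} * q ^ (n + 1 - deg j) with hTdef
          -- hA : a ∈ (span{f ι} * q^(n - deg ι) ⊔ S) ⊔ T
          -- goal : a ∈ S ⊔ (span{f ι} * q^(n+1 - deg ι) ⊔ T)
          by_cases hδ : deg ι ≤ n
          · -- main case
            have hT1 : T ≤ q ^ (n + 1) := by
              refine ideal_sum_le fun j _ => ?_
              calc Ideal.span {f j} * q ^ (n + 1 - deg j)
                  ≤ q ^ (deg j) * q ^ (n + 1 - deg j) :=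
                    Ideal.mul_mono_left ((Ideal.span_singleton_le_iff_mem _).mpr (hdeg j).1)
                _ = q ^ (deg j + (n + 1 - deg j)) := (pow_add _ _ _).symm
                _ ≤ q ^ (n + 1) := Ideal.pow_le_pow_right (by omega)
            obtain ⟨y, hy, z, hz, rfl⟩ := Submodule.mem_sup.mp hA
            obtain ⟨u, hu, v, hv, rfl⟩ := Submodule.mem_sup.mp hy
            obtain ⟨b, hb, rfl⟩ := Ideal.mem_span_singleton_mul.mp hu
            -- apply hinit at index ι with n' = n - deg ι
            have harith : n - deg ι + deg ι = n := Nat.sub_add_cancel hδ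
            have hfilter : (Finset.univ.filter (fun j : Fin d => j < ι))
                = Finset.univ.filter (fun j : Fin d => j.val < i) := by
              ext j; simp [Fin.lt_def, hιdef]
            have hmem : f ι * b ∈ (∑ j ∈ Finset.univ.filter (fun j : Fin d => j < ι),
                Ideal.span {f j} * q ^ (n - deg ι + deg ι - deg j)) ⊔
                  q ^ (n - deg ι + deg ι + 1) := by
              rw [harith, hfilter, ← hSdef]
              have : f ι * b = (f ι * b + v + z) - v - z := by ring
              rw [this]
              refine Submodule.sub_mem _ (Submodule.sub_mem _ ?_ ?_) ?_
              · exact Submodule.mem_sup_right haq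
              · exact Submodule.mem_sup_left hv
              · exact Submodule.mem_sup_right (hT1 hz)
            have hb2 := hinit ι (n - deg ι) b hb hmem
            -- hb2 : b ∈ (∑_{j<ι} span{f j} * q^(n - deg ι - deg j)) ⊔ q^(n - deg ι + 1)
            have hu2 : f ι * b ∈ Ideal.span {f ι} *
                ((∑ j ∈ Finset.univ.filter (fun j : Fin d => j < ι),
                  Ideal.span {f j} * q ^ (n - deg ι - deg j)) ⊔ q ^ (n - deg ι + 1)) :=
              Ideal.mul_mem_mul (Ideal.mem_span_singleton_self _) hb2
            have hle : Ideal.span {f ι} *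
                ((∑ j ∈ Finset.univ.filter (fun j : Fin d => j < ι),
                  Ideal.span {f j} * q ^ (n - deg ι - deg j)) ⊔ q ^ (n - deg ι + 1)) ≤
                S ⊔ (Ideal.span {f ι} * q ^ (n + 1 - deg ι) ⊔ T) := by
              rw [Ideal.mul_sup]
              refine sup_le ?_ ?_
              · rw [Finset.mul_sum]
                refine le_trans (ideal_sum_le fun j hj => ?_) le_sup_left
                have hj' : j ∈ Finset.univ.filter (fun j : Fin d => j.val < i) := by
                  rwa [hfilter] at hj
                refine le_trans ?_ (ideal_le_sum (p := fun j =>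
                  Ideal.span {f j} * q ^ (n - deg j)) hj')
                calc Ideal.span {f ι} * (Ideal.span {f j} * q ^ (n - deg ι - deg j))
                    = Ideal.span {f j} * (Ideal.span {f ι} * q ^ (n - deg ι - deg j)) := by
                      ring
                  _ ≤ Ideal.span {f j} * (q ^ (deg ι) * q ^ (n - deg ι - deg j)) :=
                      Ideal.mul_mono_right (Ideal.mul_mono_left
                        ((Ideal.span_singleton_le_iff_mem _).mpr (hdeg ι).1))
                  _ = Ideal.span {f j} * q ^ (deg ι + (n - deg ι - deg j)) := by
                      rw [pow_add]
                  _ ≤ Ideal.span {f j} * q ^ (n - deg j) :=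
                      Ideal.mul_mono_right (Ideal.pow_le_pow_right (by omega))
              · have : n - deg ι + 1 = n + 1 - deg ι := by omega
                rw [this]
                exact le_sup_of_le_right le_sup_left
            exact Submodule.add_mem _
              (Submodule.add_mem _ (hle hu2) (Submodule.mem_sup_left hv))
              (Submodule.mem_sup_right (Submodule.mem_sup_right hz))
          · -- deg ι > n : the coefficient of f ι is trivially in q^(n+1-deg ι) = ⊤
            have h0 : n + 1 - deg ι = 0 := by omega
            have hle : (Ideal.span {f ι} * q ^ (n - deg ι) ⊔ S) ⊔ T ≤
                S ⊔ (Ideal.span {f ι} * q ^ (n + 1 - deg ι) ⊔ T) := by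
              refine sup_le (sup_le ?_ le_sup_left) (le_sup_of_le_right le_sup_right)
              refine le_sup_of_le_right (le_sup_of_le_left ?_)
              rw [h0, pow_zero]
              exact Ideal.mul_mono_right (by rw [Ideal.one_eq_top]; exact le_top)
            exact hle hA
        · -- i ≥ d : the filters at i and i+1 agree
          have e1 : (Finset.univ.filter (fun j : Fin d => j.val < i + 1))
              = Finset.univ.filter (fun j : Fin d => j.val < i) := by
            ext j; have := j.isLt; simp only [Finset.mem_filter, Finset.mem_univ, true_and]; omega
          have e2 : (Finset.univ.filter (fun j : Fin d => i + 1 ≤ j.val))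
              = Finset.univ.filter (fun j : Fin d => i ≤ j.val) := by
            ext j; have := j.isLt; simp only [Finset.mem_filter, Finset.mem_univ, true_and]; omega
          rw [e1, e2] at hA
          exact ih2 a haq hA
    refine inner d a hq1 ?_
    have e1 : (Finset.univ.filter (fun j : Fin d => j.val < d)) = Finset.univ := by
      ext j; simp [j.isLt]
    have e2 : (Finset.univ.filter (fun j : Fin d => d ≤ j.val)) = (∅ : Finset (Fin d)) := by
      ext j; have := j.isLt; simp only [Finset.mem_filter, Finset.mem_univ, true_and,
        Finset.notMem_empty, iff_false]; omega
    rw [e1, e2, Finset.sum_empty]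
    exact Submodule.mem_sup_left ha'
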